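/- Let π be a 132-avoiding permutation and w a permutation with w ≤_L π. If a < b < k satisfy (a,k) ∈ coInv(w⁻¹), (b,k) ∈ Inv(w⁻¹), and (a,b) ∈ coInv(π w⁻¹), then π contains a 132-pattern — contradiction. Hence under these hypotheses, (a,b) ∈ Inv(π w⁻¹). -/

import Mathlib

open Equiv MvPolynomial

/-- A permutation of ℕ has finite support. -/
def FinSupp (w : Equiv.Perm ℕ) : Prop := {i | w i ≠ i}.Finite

/-- Inversion set Inv(w) = {(i,j) : i < j, w i > w j}. -/
def invSet (w : Equiv.Perm ℕ) : Set (ℕ × ℕ) := {p | p.1 < p.2 ∧ w p.2 < w p.1}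

/-- Co-inversion set coInv(w) = {(i,j) : i < j, w i < w j}. -/
def coinvSet (w : Equiv.Perm ℕ) : Set (ℕ × ℕ) := {p | p.1 < p.2 ∧ w p.1 < w p.2}

/-- Coxeter length ℓ(w) = |Inv(w)|. -/
noncomputable def len (w : Equiv.Perm ℕ) : ℕ := (invSet w).ncard

/-- Cover relation of left weak order: u = s_k * w with ℓ(u) = ℓ(w) + 1. -/
def WeakCover (w u : Equiv.Perm ℕ) : Prop :=
  ∃ k, u = Equiv.swap k (k + 1) * w ∧ len u = len w + 1

/-- Left weak order: reflexive-transitive closure of weak covers. -/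
def leL (w u : Equiv.Perm ℕ) : Prop := Relation.ReflTransGen WeakCover w u

/-- π avoids the pattern 132 (π is dominant). -/
def Avoids132 (π : Equiv.Perm ℕ) : Prop :=
  ¬ ∃ a b c : ℕ, a < b ∧ b < c ∧ π a < π c ∧ π c < π b

/-- Rothe diagram D(π) (0-indexed conventions). -/
def Rothe (π : Equiv.Perm ℕ) : Set (ℕ × ℕ) := {p | p.1 < π⁻¹ p.2 ∧ p.2 < π p.1}

/-- Young diagram of a partition (0-indexed): row i has l i cells. -/
def yd (l : ℕ → ℕ) : Set (ℕ × ℕ) := {p | p.2 < l p.1}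

/-- Conjugate partition (0-indexed): column j has |{i : l i > j}| cells. -/
noncomputable def conjPart (l : ℕ → ℕ) (j : ℕ) : ℕ := {i | j < l i}.ncard

/-- A pipe dream: a finite set of crossing tiles together with the (uniquely
determined) labels of the pipes on the four edges of each tile.  At a cross
tile the pipes pass straight through; at a bump tile the pipe from the north
exits west and the pipe from the east exits south.  Pipe j enters the quadrant
at the north edge of column j. -/
structure PipeDream where
  cross : Finset (ℕ × ℕ)
  north : ℕ × ℕ → ℕ
  east : ℕ × ℕ → ℕ
  south : ℕ × ℕ → ℕ
  west : ℕ × ℕ → ℕ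
  north_top : ∀ j, north (0, j) = j
  north_succ : ∀ i j, north (i + 1, j) = south (i, j)
  east_eq : ∀ i j, east (i, j) = west (i, j + 1)
  south_cross : ∀ p ∈ cross, south p = north p
  west_cross : ∀ p ∈ cross, west p = east p
  south_bump : ∀ p, p ∉ cross → south p = east p
  west_bump : ∀ p, p ∉ cross → west p = north p

namespace PipeDream

/-- Pipes a and b cross at position p. -/
def CrossAt (P : PipeDream) (a b : ℕ) (p : ℕ × ℕ) : Prop :=
  p ∈ P.cross ∧ ({P.north p, P.east p} : Set ℕ) = {a, b}

/-- A pipe dream is reduced if no two pipes cross more than once. -/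
def Reduced (P : PipeDream) : Prop :=
  ∀ a b p q, P.CrossAt a b p → P.CrossAt a b q → p = q

/-- P is a pipe dream for the permutation w: pipe a exits on the west edge at
row w⁻¹(a), i.e. the one-line notation read along the west edge is w. -/
def IsFor (P : PipeDream) (w : Equiv.Perm ℕ) : Prop := ∀ i, P.west (i, 0) = w i

/-- Pipe k passes through the tile p. -/
def OnPipe (P : PipeDream) (k : ℕ) (p : ℕ × ℕ) : Prop := P.north p = k ∨ P.east p = k

/-- p lies weakly northwest of pipe k. -/
def NWOfPipe (P : PipeDream) (k : ℕ) (p : ℕ × ℕ) : Prop :=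
  ∃ q, P.OnPipe k q ∧ p.1 ≤ q.1 ∧ p.2 ≤ q.2

end PipeDream

/-- The set of reduced pipe dreams for w. -/
def PD (w : Equiv.Perm ℕ) : Set PipeDream := {P | P.Reduced ∧ P.IsFor w}

/-- The set of π-dominated positions of a pipe dream P ∈ PD(w), where π is the
dominant permutation with Rothe diagram the Young diagram of l:
row(p) < λ'(π(w⁻¹(s_p))) (0-indexed), s_p being the pipe exiting p south. -/
noncomputable def dominated (π : Equiv.Perm ℕ) (l : ℕ → ℕ) (w : Equiv.Perm ℕ)
    (P : PipeDream) : Set (ℕ × ℕ) :=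
  {p | p.1 < conjPart l (π (w⁻¹ (P.south p)))}

/-- The Schubert polynomial as the pipe dream generating function. -/
noncomputable def Schub (w : Equiv.Perm ℕ) : MvPolynomial ℕ ℤ :=
  ∑ᶠ P ∈ PD w, ∏ p ∈ P.cross, X p.1

/-- The polynomial ring ℤ[x;y]: x-variables are `Sum.inl i`, y-variables `Sum.inr i`. -/
abbrev PolyXY := MvPolynomial (ℕ ⊕ ℕ) ℤ

/-- The field of rational functions in the x- and y-variables. -/
noncomputable abbrev RatXY := FractionRing PolyXY

noncomputable def Xv (i : ℕ) : RatXY := algebraMap PolyXY RatXY (X (Sum.inl i))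
noncomputable def Yv (i : ℕ) : RatXY := algebraMap PolyXY RatXY (X (Sum.inr i))

/-- The π-padded Schubert polynomial 𝔖_w^π(x;y) = y^λ · 𝔖_w(x₁/y₁, x₂/y₂, …),
viewed in the field of rational functions. -/
noncomputable def padded (l : ℕ → ℕ) (w : Equiv.Perm ℕ) : RatXY :=
  (∏ᶠ i, Yv i ^ l i) * (aeval (fun i => Xv i / Yv i) (Schub w))

/-- Δ = Σ_i x_i ∂/∂y_i. -/
noncomputable def deltaOp (f : PolyXY) : PolyXY :=
  ∑ᶠ i : ℕ, X (Sum.inl i) * pderiv (Sum.inr i) f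

/-- ∇ = Σ_i y_i ∂/∂x_i. -/
noncomputable def nablaOp (f : PolyXY) : PolyXY :=
  ∑ᶠ i : ℕ, X (Sum.inr i) * pderiv (Sum.inl i) f

private lemma swap_lt_aux (k m n : ℕ) (h : m < n) (hne : ¬(m = k ∧ n = k + 1)) :
    Equiv.swap k (k + 1) m < Equiv.swap k (k + 1) n := by
  simp only [Equiv.swap_apply_def]
  split_ifs <;> omega

private lemma cover_invSet_subset {w u : Equiv.Perm ℕ} (h : WeakCover w u) :
    invSet w ⊆ invSet u := by
  obtain ⟨k, rfl, hlen⟩ := h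
  by_cases hk : w⁻¹ k < w⁻¹ (k + 1)
  · rintro ⟨i, j⟩ ⟨hij, hw⟩
    refine ⟨hij, ?_⟩
    simp only [Equiv.Perm.mul_apply]
    refine swap_lt_aux k _ _ hw ?_
    rintro ⟨h1, h2⟩
    have : w⁻¹ k = j := by rw [← h1]; simp
    have : w⁻¹ (k + 1) = i := by rw [← h2]; simp
    omega
  · exfalso
    have hne : w⁻¹ (k + 1) ≠ w⁻¹ k := by
      intro h; have := w⁻¹.injective h; omega
    have hk' : w⁻¹ (k + 1) < w⁻¹ k := by omega
    set p : ℕ × ℕ := (w⁻¹ (k + 1), w⁻¹ k) with hp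
    have hpw : p ∈ invSet w := by
      refine ⟨hk', ?_⟩; simp [hp]
    have hpu : p ∉ invSet (Equiv.swap k (k + 1) * w) := by
      rintro ⟨-, hlt⟩
      simp only [hp, Equiv.Perm.mul_apply, Equiv.Perm.coe_inv, Equiv.apply_symm_apply] at hlt
      rw [Equiv.swap_apply_left, Equiv.swap_apply_right] at hlt
      omega
    have hsub : invSet (Equiv.swap k (k + 1) * w) ⊆ invSet w := by
      rintro ⟨i, j⟩ ⟨hij, hw⟩
      refine ⟨hij, ?_⟩
      show w j < w i
      by_contra hle
      have hne2 : w i ≠ w j := fun h => by have := w.injective h; omega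
      have hlt2 : w i < w j := by omega
      have : Equiv.swap k (k + 1) (w i) < Equiv.swap k (k + 1) (w j) := by
        refine swap_lt_aux k _ _ hlt2 ?_
        rintro ⟨h1, h2⟩
        have e1 : w⁻¹ k = i := by rw [← h1]; simp
        have e2 : w⁻¹ (k + 1) = j := by rw [← h2]; simp
        omega
      simp only [Equiv.Perm.mul_apply] at hw
      exact absurd hw (not_lt.2 this.le)
    have heq : invSet w = insert p (invSet (Equiv.swap k (k + 1) * w)) := by
      apply Set.Subset.antisymm
      · rintro ⟨i, j⟩ ⟨hij, hw⟩
        by_cases hpq : ((i, j) : ℕ × ℕ) = p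
        · exact hpq ▸ Set.mem_insert _ _
        · refine Set.mem_insert_iff.mpr (Or.inr ⟨hij, ?_⟩)
          simp only [Equiv.Perm.mul_apply]
          refine swap_lt_aux k _ _ hw ?_
          rintro ⟨h1, h2⟩
          apply hpq
          have e1 : w⁻¹ k = j := by rw [← h1]; simp
          have e2 : w⁻¹ (k + 1) = i := by rw [← h2]; simp
          simp [hp, e1, e2]
      · rintro q hq
        rcases Set.mem_insert_iff.mp hq with rfl | hq
        · exact hpw
        · exact hsub hq
    by_cases hfin : (invSet (Equiv.swap k (k + 1) * w)).Finite
    · have : len w = len (Equiv.swap k (k + 1) * w) + 1 := by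
        rw [len, heq, Set.ncard_insert_of_notMem hpu hfin]; rfl
      omega
    · have hfin' : ¬ (invSet w).Finite := by
        rw [heq]; intro h
        exact hfin (h.subset (Set.subset_insert _ _))
      have h0 : len (Equiv.swap k (k + 1) * w) = 0 := Set.Infinite.ncard hfin
      have h0' : len w = 0 := Set.Infinite.ncard hfin'
      omega

private lemma leL_invSet_subset {w π : Equiv.Perm ℕ} (h : leL w π) :
    invSet w ⊆ invSet π := by
  induction h with
  | refl => exact le_refl _
  | tail _ hcov ih => exact ih.trans (cover_invSet_subset hcov)

/-- if π is 132-avoiding, w ≤_L π, a < b < k,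
(a,k) ∈ coInv(w⁻¹) and (b,k) ∈ Inv(w⁻¹), then (a,b) ∈ Inv(πw⁻¹)
(for otherwise π would contain a 132-pattern). -/
theorem stmt15 (π w : Equiv.Perm ℕ) (hdom : Avoids132 π) (hw : leL w π)
    (a b k : ℕ) (hab : a < b) (hbk : b < k)
    (h1 : (a, k) ∈ coinvSet w⁻¹) (h2 : (b, k) ∈ invSet w⁻¹) :
    (a, b) ∈ invSet (π * w⁻¹) := by
  have hsub := leL_invSet_subset hw
  obtain ⟨-, h1'⟩ := h1
  obtain ⟨-, h2'⟩ := h2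
  refine ⟨hab, ?_⟩
  by_contra hle
  simp only [invSet, Equiv.Perm.mul_apply, Set.mem_setOf_eq, not_lt] at hle
  have hne : π (w⁻¹ a) ≠ π (w⁻¹ b) := by
    intro h
    have := w⁻¹.injective (π.injective h)
    omega
  have hab' : π (w⁻¹ a) < π (w⁻¹ b) := lt_of_le_of_ne hle hne
  have hkb : (w⁻¹ k, w⁻¹ b) ∈ invSet π := by
    apply hsub
    refine ⟨h2', ?_⟩
    simp; omega
  obtain ⟨-, hkb'⟩ := hkb
  simp only [coinvSet, Set.mem_setOf_eq] at h1'
  exact hdom ⟨w⁻¹ a, w⁻¹ k, w⁻¹ b, h1', h2', hab', hkb'⟩
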